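/- Let Q be an R-separating subpolyhedron of a compact n-dimensional Riemannian polyhedron P; that is, Q is an (n−1)-dimensional subpolyhedron (with induced length metric) such that every connected component U of P \ Q has radius less than R in P. If width_{n−2}(Q) ≤ R, then width_{n−1}(P) ≤ R. -/

import Mathlib

open Metric ENNReal

/-- The radius of a subset `A` of a metric space `X`: the infimum of `R` such that `A` is
contained in a ball `B(x, R)` for some `x ∈ X`. -/
noncomputable def setRadius {X : Type*} [MetricSpace X] (A : Set X) : ℝ≥0∞ :=
  ⨅ (x : X) (R : ℝ≥0∞) (_ : A ⊆ EMetric.ball x R), R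

/-- The `m`-th width of a metric space `X`: the infimum, over finite open covers of `X` of
multiplicity at most `m + 1`, of the largest radius of a member of the cover. -/
noncomputable def width (X : Type*) [MetricSpace X] (m : ℕ) : ℝ≥0∞ :=
  ⨅ (k : ℕ) (V : Fin k → Set X)
    (_ : ∀ i, IsOpen (V i)) (_ : ⋃ i, V i = Set.univ)
    (_ : ∀ x : X, Nat.card {i : Fin k // x ∈ V i} ≤ m + 1),
    ⨆ i, setRadius (V i)

lemma setRadius_le_ball {X : Type*} [MetricSpace X] {A : Set X} {c : X} {r : ℝ≥0∞}
    (h : A ⊆ EMetric.ball c r) : setRadius A ≤ r :=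
  iInf_le_of_le c (iInf_le_of_le r (iInf_le _ h))

lemma exists_ball_of_setRadius_lt {X : Type*} [MetricSpace X] {A : Set X} {r : ℝ≥0∞}
    (h : setRadius A < r) : ∃ c, A ⊆ EMetric.ball c r := by
  rw [setRadius, iInf_lt_iff] at h
  obtain ⟨c, hc⟩ := h
  rw [iInf_lt_iff] at hc
  obtain ⟨r', hr'⟩ := hc
  rw [iInf_lt_iff] at hr'
  obtain ⟨hsub, hlt⟩ := hr'
  exact ⟨c, hsub.trans (EMetric.ball_subset_ball hlt.le)⟩

/-- In a compact Hausdorff space, any open set containing a connected component contains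
a clopen set containing that component's basepoint. -/
lemma exists_isClopen_of_cc_subset {X : Type*} [TopologicalSpace X]
    [T2Space X] [CompactSpace X] {x : X} {U : Set X} (hU : IsOpen U)
    (h : connectedComponent x ⊆ U) :
    ∃ Z : Set X, IsClopen Z ∧ x ∈ Z ∧ Z ⊆ U := by
  classical
  have hI := connectedComponent_eq_iInter_isClopen x
  have hcomp : IsCompact Uᶜ := hU.isClosed_compl.isCompact
  have hcover : Uᶜ ⊆ ⋃ s : { s : Set X // IsClopen s ∧ x ∈ s }, (↑s : Set X)ᶜ := by
    intro y hy
    have hy' : y ∉ connectedComponent x := fun h' => hy (h h')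
    rw [hI, Set.mem_iInter] at hy'
    push_neg at hy'
    obtain ⟨s, hs⟩ := hy'
    exact Set.mem_iUnion.2 ⟨s, hs⟩
  obtain ⟨t, ht⟩ := hcomp.elim_finite_subcover _
    (fun s : { s : Set X // IsClopen s ∧ x ∈ s } => s.2.1.isClosed.isOpen_compl) hcover
  refine ⟨⋂ s ∈ t, ↑s, isClopen_biInter_finset (fun s _ => s.2.1), ?_, ?_⟩
  · exact Set.mem_iInter₂.2 fun s _ => s.2.2
  · intro y hy
    by_contra hyU
    obtain ⟨s, hst, hys⟩ := Set.mem_iUnion₂.1 (ht hyU)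
    exact hys (Set.mem_iInter₂.1 hy s hst)

set_option maxHeartbeats 1600000 in
/-- **Separating subpolyhedra and width.** Let `Q` be an `R`-separating subpolyhedron of a
compact `n`-dimensional Riemannian polyhedron `P`: a closed `(n-1)`-dimensional subpolyhedron
such that every connected component of `P \ Q` has radius less than `R` in `P`.
If `width_{n-2} Q ≤ R`, then `width_{n-1} P ≤ R`. -/
theorem width_le_of_separating_subpolyhedron
    (n : ℕ) (hn : 2 ≤ n) {P : Type*} [MetricSpace P] [CompactSpace P] [Nonempty P]
    (Q : Set P) (hQclosed : IsClosed Q)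
    (R : ℝ≥0∞)
    (hsep : ∀ x ∈ Qᶜ, setRadius (connectedComponentIn Qᶜ x) < R)
    (hQwidth : width Q (n - 2) ≤ R) :
    width P (n - 1) ≤ R := by
  classical
  refine le_of_forall_gt_imp_ge_of_dense fun b hb => ?_
  obtain ⟨b', hRb', hb'b⟩ := exists_between hb
  -- Step 1: extract a good cover of Q
  have hQw : width Q (n - 2) < b' := lt_of_le_of_lt hQwidth hRb'
  rw [width, iInf_lt_iff] at hQw
  obtain ⟨k, hQw⟩ := hQw
  rw [iInf_lt_iff] at hQw
  obtain ⟨V, hQw⟩ := hQw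
  rw [iInf_lt_iff] at hQw
  obtain ⟨hVopen, hQw⟩ := hQw
  rw [iInf_lt_iff] at hQw
  obtain ⟨hVcover, hQw⟩ := hQw
  rw [iInf_lt_iff] at hQw
  obtain ⟨hVmult, hVrad⟩ := hQw
  have hVball : ∀ i, ∃ c : Q, V i ⊆ EMetric.ball c b' := fun i =>
    exists_ball_of_setRadius_lt ((le_iSup (fun i => setRadius (V i)) i).trans_lt hVrad)
  choose c hc using hVball
  have hVopen' : ∀ i, ∃ O : Set P, IsOpen O ∧ V i = Subtype.val ⁻¹' O := by
    intro i
    obtain ⟨O, hO, hVO⟩ := isOpen_induced_iff.1 (hVopen i)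
    exact ⟨O, hO, hVO.symm⟩
  choose O hOopen hVO using hVopen'
  have hQcomp : IsCompact Q := hQclosed.isCompact
  have hQsubO : Q ⊆ ⋃ i, O i := by
    intro q hq
    have h1 : (⟨q, hq⟩ : Q) ∈ ⋃ i, V i := by rw [hVcover]; trivial
    obtain ⟨i, hi⟩ := Set.mem_iUnion.1 h1
    rw [hVO i] at hi
    exact Set.mem_iUnion.2 ⟨i, hi⟩
  obtain ⟨δ, hδpos, hleb⟩ := lebesgue_number_lemma_of_metric hQcomp hOopen hQsubO
  set lam : ℝ≥0∞ := ENNReal.ofReal δ with hlam_def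
  have hlampos : 0 < lam := ENNReal.ofReal_pos.2 hδpos
  have hlamne : lam ≠ ∞ := ENNReal.ofReal_ne_top
  set ε : ℝ≥0∞ := min (b - b') (lam / 2) with hε_def
  have hεpos : 0 < ε := lt_min (tsub_pos_of_lt hb'b) (ENNReal.div_pos hlampos.ne' (by norm_num))
  have hεb : b' + ε ≤ b := by
    calc b' + ε ≤ b' + (b - b') := add_le_add_right (min_le_left _ _) b'
      _ = b := add_tsub_cancel_of_le hb'b.le
  have hεlam : ε ≤ lam - ε := by
    calc ε ≤ lam / 2 := min_le_right _ _
      _ = lam - lam / 2 := (ENNReal.sub_half hlamne).symm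
      _ ≤ lam - ε := tsub_le_tsub_left (min_le_right _ _) lam
  -- the thickened cover of a neighborhood of Q
  set U : Fin k → Set P := fun i =>
    {x | EMetric.infEdist x (Q ∩ O i) < EMetric.infEdist x (Q \ O i)} ∩
      {x | EMetric.infEdist x Q < ε} with hU_def
  have hUopen : ∀ i, IsOpen (U i) := fun _ =>
    (isOpen_lt EMetric.continuous_infEdist EMetric.continuous_infEdist).inter
      (isOpen_lt EMetric.continuous_infEdist continuous_const)
  have hmemV : ∀ (i) (q : P) (hq : q ∈ Q), q ∈ O i → (⟨q, hq⟩ : Q) ∈ V i := by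
    intro i q hq hqO; rw [hVO i]; exact hqO
  have hUball : ∀ i, U i ⊆ EMetric.ball (c i : P) (b' + ε) := by
    intro i x hx
    obtain ⟨hx1, hx2⟩ := hx
    have key : ∃ v : P, v ∈ Q ∩ O i ∧ edist x v < ε := by
      obtain ⟨q, hqQ, hq⟩ := EMetric.infEdist_lt_iff.1 hx2
      by_cases hqO : q ∈ O i
      · exact ⟨q, ⟨hqQ, hqO⟩, hq⟩
      · have h3 : EMetric.infEdist x (Q \ O i) < ε :=
          lt_of_le_of_lt (EMetric.infEdist_le_edist_of_mem ⟨hqQ, hqO⟩) hq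
        obtain ⟨v, hv, hv2⟩ := EMetric.infEdist_lt_iff.1 (hx1.trans h3)
        exact ⟨v, hv, hv2⟩
    obtain ⟨v, ⟨hvQ, hvO⟩, hv⟩ := key
    have hvc : edist v (c i : P) < b' := by
      have h4 := hc i (hmemV i v hvQ hvO)
      rwa [EMetric.ball, EMetric.mem_ball, Subtype.edist_eq] at h4
    have h5 : edist x (c i : P) < ε + b' :=
      lt_of_le_of_lt (edist_triangle x v _) (ENNReal.add_lt_add hv hvc)
    rw [EMetric.ball, EMetric.mem_ball, add_comm b' ε]
    exact h5
  have hUcov : ∀ x : P, EMetric.infEdist x Q < ε → ∃ i, x ∈ U i := by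
    intro x hx
    obtain ⟨q, hqQ, hq⟩ := EMetric.infEdist_lt_iff.1 hx
    obtain ⟨i, hi⟩ := hleb q hqQ
    have hqO : q ∈ O i := hi (Metric.mem_ball_self hδpos)
    refine ⟨i, ?_, hx⟩
    have h1 : EMetric.infEdist x (Q ∩ O i) < ε :=
      lt_of_le_of_lt (EMetric.infEdist_le_edist_of_mem ⟨hqQ, hqO⟩) hq
    refine h1.trans_le (hεlam.trans ?_)
    rw [EMetric.infEdist, EMetric.le_infEdist]
    intro y hy
    have hyq : lam ≤ edist q y := by
      rw [hlam_def, edist_dist]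
      refine ENNReal.ofReal_le_ofReal ?_
      by_contra hlt
      push_neg at hlt
      exact hy.2 (hi (by rw [Metric.mem_ball, dist_comm]; exact hlt))
    have h6 : lam ≤ ε + edist x y := by
      refine le_trans hyq (le_trans (edist_triangle q x y) ?_)
      have : edist q x < ε := by rwa [edist_comm]
      exact add_le_add_left this.le _
    exact tsub_le_iff_left.2 h6
  have hUmult : ∀ x : P, Nat.card {i : Fin k // x ∈ U i} ≤ n - 1 := by
    intro x
    by_cases hne : Nonempty {i : Fin k // x ∈ U i}
    · have huniv : (Finset.univ : Finset {i : Fin k // x ∈ U i}).Nonempty :=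
        ⟨Classical.arbitrary _, Finset.mem_univ _⟩
      obtain ⟨i₀, -, hmin⟩ := Finset.exists_min_image Finset.univ
        (fun i : {i : Fin k // x ∈ U i} => EMetric.infEdist x (Q \ O i.1)) huniv
      have hxQ : EMetric.infEdist x Q < EMetric.infEdist x (Q \ O i₀.1) :=
        lt_of_le_of_lt (EMetric.infEdist_anti Set.inter_subset_left) i₀.2.1
      obtain ⟨q, hqQ, hq⟩ := EMetric.infEdist_lt_iff.1 hxQ
      have hqV : ∀ i : {i : Fin k // x ∈ U i}, (⟨q, hqQ⟩ : Q) ∈ V i.1 := by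
        intro i
        refine hmemV _ _ _ ?_
        by_contra hqO
        have h1 : EMetric.infEdist x (Q \ O i.1) ≤ edist x q :=
          EMetric.infEdist_le_edist_of_mem ⟨hqQ, hqO⟩
        have h2 := hmin i (Finset.mem_univ i)
        exact absurd hq (not_lt.2 (le_trans h2 h1))
      have hinj : Function.Injective (fun i : {i : Fin k // x ∈ U i} =>
          (⟨i.1, hqV i⟩ : {i : Fin k // (⟨q, hqQ⟩ : Q) ∈ V i})) := by
        intro a b hab
        simp only [Subtype.mk.injEq] at hab
        exact Subtype.ext hab
      calc Nat.card {i : Fin k // x ∈ U i}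
          ≤ Nat.card {i : Fin k // (⟨q, hqQ⟩ : Q) ∈ V i} :=
            Nat.card_le_card_of_injective _ hinj
        _ ≤ (n - 2) + 1 := hVmult _
        _ = n - 1 := by omega
    · rw [not_nonempty_iff] at hne
      rw [Nat.card_of_isEmpty]
      omega
  -- Step 2: handle the part far from Q using the separation hypothesis
  set K : Set P := {x | ε ≤ EMetric.infEdist x Q} with hK_def
  have hKclosed : IsClosed K := isClosed_le continuous_const EMetric.continuous_infEdist
  have hKcomp : IsCompact K := hKclosed.isCompact
  have hKQ : ∀ x ∈ K, x ∈ Qᶜ := by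
    intro x hx hxQ
    rw [hK_def, Set.mem_setOf_eq, EMetric.infEdist, EMetric.infEdist_zero_of_mem hxQ] at hx
    exact hεpos.not_ge hx
  haveI : CompactSpace ↥K := isCompact_iff_compactSpace.1 hKcomp
  have hKdata : ∀ x : ↥K, ∃ (cp : P) (OO : Set P), IsOpen OO ∧ ↑x ∈ OO ∧
      IsClosed (K ∩ OO) ∧ K ∩ OO ⊆ EMetric.ball cp R := by
    intro x
    have hxQc : (x : P) ∈ Qᶜ := hKQ _ x.2
    obtain ⟨cp, hcp⟩ := exists_ball_of_setRadius_lt (hsep _ hxQc)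
    have hsub : connectedComponent x ⊆ (Subtype.val ⁻¹' EMetric.ball cp R : Set ↥K) := by
      rw [← Set.image_subset_iff]
      have h1 : Subtype.val '' connectedComponent x = connectedComponentIn K ↑x :=
        (connectedComponentIn_eq_image x.2).symm
      rw [h1]
      exact (connectedComponentIn_mono (↑x) (fun y hy => hKQ y hy)).trans hcp
    obtain ⟨Z, hZclopen, hxZ, hZsub⟩ := exists_isClopen_of_cc_subset
      (EMetric.isOpen_ball.preimage continuous_subtype_val) hsub
    obtain ⟨OO, hOOopen, hZO⟩ := isOpen_induced_iff.1 hZclopen.isOpen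
    have himg : Subtype.val '' Z = K ∩ OO := by
      rw [← hZO, Subtype.image_preimage_coe]
    refine ⟨cp, OO, hOOopen, ?_, ?_, ?_⟩
    · have h2 : x ∈ Z := hxZ
      rw [← hZO] at h2
      exact h2
    · have hZcomp : IsCompact Z := hZclopen.isClosed.isCompact
      have h3 : IsCompact (K ∩ OO) := himg ▸ hZcomp.image continuous_subtype_val
      exact h3.isClosed
    · rw [← himg, Set.image_subset_iff]
      exact hZsub
  choose cp OO hOOopen hmemOO hclosedKO hballKO using hKdata
  have hKcover : K ⊆ ⋃ x : ↥K, OO x := fun y hy => Set.mem_iUnion.2 ⟨⟨y, hy⟩, hmemOO _⟩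
  obtain ⟨t, ht⟩ := hKcomp.elim_finite_subcover OO hOOopen hKcover
  set m := Fintype.card ↥t with hm_def
  set g : Fin m → ↥t := fun j => (Fintype.equivFin ↥t).symm j with hg_def
  set C : Fin m → Set P := fun j => K ∩ OO ↑(g j) with hC_def
  set D : Fin m → Set P := fun j => C j \ ⋃ (l : Fin m) (_ : l < j), OO ↑(g l) with hD_def
  have hDclosed : ∀ j, IsClosed (D j) := by
    intro j
    show IsClosed (C j \ ⋃ (l : Fin m) (_ : l < j), OO ↑(g l))
    rw [Set.diff_eq]
    exact (hclosedKO _).inter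
      (isOpen_iUnion fun l => isOpen_iUnion fun _ => hOOopen _).isClosed_compl
  have hDsubC : ∀ j, D j ⊆ C j := fun j => Set.diff_subset
  have hDsubO : ∀ j, D j ⊆ OO ↑(g j) := fun j y hy => hy.1.2
  have hDdisj : ∀ j l, j < l → ∀ y, y ∈ D j → y ∉ D l := by
    intro j l hjl y hyj hyl
    exact hyl.2 (Set.mem_iUnion₂.2 ⟨j, hjl, hDsubO j hyj⟩)
  have hDK : K ⊆ ⋃ j, D j := by
    intro y hy
    have h1 : ∃ j : Fin m, y ∈ OO ↑(g j) := by
      obtain ⟨x, hxt, hyx⟩ := Set.mem_iUnion₂.1 (ht hy)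
      refine ⟨Fintype.equivFin ↥t ⟨x, hxt⟩, ?_⟩
      have : g (Fintype.equivFin ↥t ⟨x, hxt⟩) = ⟨x, hxt⟩ := by
        rw [hg_def]; exact Equiv.symm_apply_apply _ _
      rw [this]
      exact hyx
    have hSne : (Finset.univ.filter fun j : Fin m => y ∈ OO ↑(g j)).Nonempty := by
      obtain ⟨j, hj⟩ := h1
      exact ⟨j, Finset.mem_filter.2 ⟨Finset.mem_univ _, hj⟩⟩
    obtain ⟨j, hjO, hjmin⟩ := Finset.exists_min_image _ id hSne
    rw [Finset.mem_filter] at hjO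
    refine Set.mem_iUnion.2 ⟨j, ⟨⟨hy, hjO.2⟩, ?_⟩⟩
    intro hmem
    obtain ⟨l, hlj, hyl⟩ := Set.mem_iUnion₂.1 hmem
    have h2 := hjmin l (Finset.mem_filter.2 ⟨Finset.mem_univ _, hyl⟩)
    exact absurd hlj (not_lt.2 h2)
  have hDball : ∀ j, D j ⊆ EMetric.ball (cp ↑(g j)) R := fun j y hy => hballKO _ (hDsubC j hy)
  set G : Fin m → Set P := fun j =>
    EMetric.ball (cp ↑(g j)) R ∩
      {y | EMetric.infEdist y (D j) <
        EMetric.infEdist y (⋃ l ∈ ({j}ᶜ : Set (Fin m)), D l)} with hG_def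
  have hGopen : ∀ j, IsOpen (G j) := fun _ =>
    EMetric.isOpen_ball.inter
      (isOpen_lt EMetric.continuous_infEdist EMetric.continuous_infEdist)
  have hDG : ∀ j, D j ⊆ G j := by
    intro j y hy
    refine ⟨hDball j hy, ?_⟩
    rw [Set.mem_setOf_eq, EMetric.infEdist, EMetric.infEdist_zero_of_mem hy, pos_iff_ne_zero]
    intro h0
    have hclosed : IsClosed (⋃ l ∈ ({j}ᶜ : Set (Fin m)), D l) :=
      Set.Finite.isClosed_biUnion (Set.toFinite _) fun l _ => hDclosed l
    have hmem : y ∈ ⋃ l ∈ ({j}ᶜ : Set (Fin m)), D l := by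
      rw [← hclosed.closure_eq]
      exact EMetric.mem_closure_iff_infEdist_zero.2 h0
    obtain ⟨l, hlj, hyl⟩ := Set.mem_iUnion₂.1 hmem
    have hlj' : l ≠ j := hlj
    rcases hlj'.lt_or_gt with h | h
    · exact hDdisj l j h y hyl hy
    · exact hDdisj j l h y hy hyl
  have hGdisj : ∀ x : P, ∀ j l : Fin m, x ∈ G j → x ∈ G l → j = l := by
    intro x j l hj hl
    by_contra hjl
    have h1 : EMetric.infEdist x (⋃ l' ∈ ({j}ᶜ : Set (Fin m)), D l') ≤
        EMetric.infEdist x (D l) :=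
      EMetric.infEdist_anti (Set.subset_biUnion_of_mem (Ne.symm hjl : l ≠ j))
    have h2 : EMetric.infEdist x (⋃ l' ∈ ({l}ᶜ : Set (Fin m)), D l') ≤
        EMetric.infEdist x (D j) :=
      EMetric.infEdist_anti (Set.subset_biUnion_of_mem (hjl : j ≠ l))
    exact absurd (lt_trans (lt_of_lt_of_le hj.2 h1) (lt_of_lt_of_le hl.2 h2)) (lt_irrefl _)
  -- Step 3: assemble the cover
  set W : Fin (k + m) → Set P := fun i => Sum.elim U G (finSumFinEquiv.symm i) with hW_def
  have hWopen : ∀ i, IsOpen (W i) := by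
    intro i
    show IsOpen (Sum.elim U G (finSumFinEquiv.symm i))
    rcases finSumFinEquiv.symm i with a | a
    · exact hUopen a
    · exact hGopen a
  have hWunion : ⋃ i, W i = (⋃ i, U i) ∪ ⋃ j, G j := by
    have h1 : ⋃ i, W i = ⋃ s, Sum.elim U G s :=
      finSumFinEquiv.symm.surjective.iUnion_comp (Sum.elim U G)
    rw [h1]
    exact Set.iUnion_sum
  have hWcover : ⋃ i, W i = Set.univ := by
    rw [Set.eq_univ_iff_forall]
    intro x
    rw [hWunion]
    by_cases hx : EMetric.infEdist x Q < ε
    · obtain ⟨i, hi⟩ := hUcov x hx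
      exact Or.inl (Set.mem_iUnion.2 ⟨i, hi⟩)
    · have hxK : x ∈ K := not_lt.1 hx
      obtain ⟨j, hj⟩ := Set.mem_iUnion.1 (hDK hxK)
      exact Or.inr (Set.mem_iUnion.2 ⟨j, hDG j hj⟩)
  have hWmult : ∀ x : P, Nat.card {i : Fin (k + m) // x ∈ W i} ≤ (n - 1) + 1 := by
    intro x
    have e1 : {i : Fin (k + m) // x ∈ W i} ≃
        {s : Fin k ⊕ Fin m // x ∈ Sum.elim U G s} :=
      finSumFinEquiv.symm.subtypeEquiv fun i => Iff.rfl
    have e2 : {s : Fin k ⊕ Fin m // x ∈ Sum.elim U G s} ≃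
        {a : Fin k // x ∈ Sum.elim U G (Sum.inl a)} ⊕
          {b : Fin m // x ∈ Sum.elim U G (Sum.inr b)} := Equiv.subtypeSum
    have e3 : {a : Fin k // x ∈ Sum.elim U G (Sum.inl a)} ≃ {i : Fin k // x ∈ U i} :=
      Equiv.subtypeEquivRight fun a => by simp
    have e4 : {b : Fin m // x ∈ Sum.elim U G (Sum.inr b)} ≃ {j : Fin m // x ∈ G j} :=
      Equiv.subtypeEquivRight fun b => by simp
    rw [Nat.card_congr (((e1.trans e2).trans (Equiv.sumCongr e3 e4))), Nat.card_sum]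
    have hG1 : Nat.card {j : Fin m // x ∈ G j} ≤ 1 := by
      rw [Finite.card_le_one_iff_subsingleton]
      exact ⟨fun a b => Subtype.ext (hGdisj x a.1 b.1 a.2 b.2)⟩
    exact add_le_add (hUmult x) hG1
  have hWrad : ∀ i, setRadius (W i) ≤ b := by
    intro i
    show setRadius (Sum.elim U G (finSumFinEquiv.symm i)) ≤ b
    rcases finSumFinEquiv.symm i with a | a
    · exact le_trans (setRadius_le_ball (hUball a)) hεb
    · exact le_trans (setRadius_le_ball Set.inter_subset_left) hb.le
  calc width P (n - 1) ≤ ⨆ i, setRadius (W i) := by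
        rw [width]
        exact iInf_le_of_le (k + m) (iInf_le_of_le W (iInf_le_of_le hWopen
          (iInf_le_of_le hWcover (iInf_le _ hWmult))))
    _ ≤ b := iSup_le hWrad
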